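/- The Gale–Nikaido example: the map F(x,y) = (e^x − y² + 3, 4y·e^x − y³) from ℝ² to ℝ² has Jacobian matrix whose leading principal minors (e^x and the full determinant e^x(4e^x + 5y²)) vanish nowhere, yet F(0,2) = F(0,−2), so F is not injective. -/

import Mathlib

theorem gale_nikaido_example (F : ℝ × ℝ → ℝ × ℝ)
    (hF : ∀ p : ℝ × ℝ, F p = (Real.exp p.1 - p.2 ^ 2 + 3,
      4 * p.2 * Real.exp p.1 - p.2 ^ 3)) :
    F (0, 2) = F (0, -2) ∧ ¬Function.Injective F ∧
      (∀ x y : ℝ,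
        deriv (fun s => Real.exp s - y ^ 2 + 3) x *
            deriv (fun s => 4 * s * Real.exp x - s ^ 3) y -
          deriv (fun s => Real.exp x - s ^ 2 + 3) y *
            deriv (fun s => 4 * y * Real.exp s - y ^ 3) x =
          Real.exp x * (4 * Real.exp x + 5 * y ^ 2)) ∧
      (∀ x y : ℝ, 0 < Real.exp x * (4 * Real.exp x + 5 * y ^ 2)) ∧
      (∀ x : ℝ, 0 < Real.exp x) := by
  have key : F (0, 2) = F (0, -2) := by
    rw [hF, hF]; norm_num
  refine ⟨key, fun h => by have := h key; norm_num at this, ?_, ?_, fun x => Real.exp_pos x⟩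
  · intro x y
    have h1 : deriv (fun s => Real.exp s - y ^ 2 + 3) x = Real.exp x := by
      simp [deriv_add_const, deriv_sub_const]
    have h2 : deriv (fun s => 4 * s * Real.exp x - s ^ 3) y
        = 4 * Real.exp x - 3 * y ^ 2 := by
      have : (fun s : ℝ => 4 * s * Real.exp x - s ^ 3)
          = fun s => (4 * Real.exp x) * s - s ^ 3 := by funext s; ring
      rw [this]
      rw [deriv_fun_sub (by fun_prop) (by fun_prop)]
      rw [deriv_const_mul _ (by fun_prop)]
      simp [deriv_pow_field]
    have h3 : deriv (fun s : ℝ => Real.exp x - s ^ 2 + 3) y = -(2 * y) := by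
      rw [deriv_add_const]
      rw [deriv_const_sub]
      simp [deriv_pow]
    have h4 : deriv (fun s => 4 * y * Real.exp s - y ^ 3) x
        = 4 * y * Real.exp x := by
      rw [deriv_sub_const]
      rw [deriv_const_mul _ (by fun_prop)]
      simp
    rw [h1, h2, h3, h4]; ring
  · intro x y
    have := Real.exp_pos x
    nlinarith [sq_nonneg y]
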